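/- Under the identification of irreducible representations of U_N^+ with words on {◦,•}, the multiplication rule u^w ⊗ u^{w′} = Σ_{w = az, w′ = \bar{z} b} u^{ab} defines an associative multiplication on the free abelian semigroup on words, with the empty word as unit. -/

import Mathlib

/-- Words on the two-letter alphabet {◦,•}: `true` = ◦ (white), `false` = • (black). -/
abbrev Word := List Bool

/-- Color balance: number of white letters minus number of black letters. -/
def cb (w : Word) : ℤ := (w.count true : ℤ) - (w.count false : ℤ)

/-- Conjugation: reverse the word and swap the colors. -/
def wconj (w : Word) : Word := (w.map (fun b => !b)).reverse

/-- Elementary cancellation: deletion of an adjacent pair ◦• or •◦. -/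
def ECancel (w w' : Word) : Prop :=
  ∃ (u v : Word) (x : Bool), w = u ++ x :: (!x) :: v ∧ w' = u ++ v

/-- Concatenation of a list of words. -/
def cat (L : List Word) : Word := L.foldr (· ++ ·) []

/-- `W^(k)`: words whose color balance is divisible by `k`. -/
def Wmod (k : ℕ) : Set Word := {w | (k : ℤ) ∣ cb w}

/-- `W^(◦,k)`: words of balance 0 all of whose prefix balances lie in `[0,k]`. -/
def Wcirc (k : ℕ) : Set Word :=
  {w | cb w = 0 ∧ ∀ l : ℕ, 0 ≤ cb (w.take l) ∧ cb (w.take l) ≤ (k : ℤ)}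

/-- `W^(•,k)`: words of balance 0 all of whose prefix balances lie in `[-k,0]`. -/
def Wbul (k : ℕ) : Set Word :=
  {w | cb w = 0 ∧ ∀ l : ℕ, -(k : ℤ) ≤ cb (w.take l) ∧ cb (w.take l) ≤ 0}

/-- `W^(◦,∞)`: words of balance 0 with all prefix balances nonnegative. -/
def WcircInf : Set Word := {w | cb w = 0 ∧ ∀ l : ℕ, 0 ≤ cb (w.take l)}

/-- `W^(•,∞)`: words of balance 0 with all prefix balances nonpositive. -/
def WbulInf : Set Word := {w | cb w = 0 ∧ ∀ l : ℕ, cb (w.take l) ≤ 0}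

/-- The fusion rule of `U_N^+` on basis words:
`u^w ⊗ u^{w'} = Σ_{w = az, w' = conj(z) b} u^{ab}`, encoded in the free
ℕ-semimodule on words.  The parameter `t` is the length of the cancelled
subword `z`. -/
noncomputable def fus (w w' : Word) : Word →₀ ℕ :=
  (((List.range (min w.length w'.length + 1)).filter
      (fun t => decide (w.drop (w.length - t) = wconj (w'.take t)))).map
    (fun t => Finsupp.single (w.take (w.length - t) ++ w'.drop t) (1 : ℕ))).sum

/-- The bilinear extension of the fusion rule to the free abelian semigroup
(free ℕ-semimodule) on words. -/
noncomputable def fmul (x y : Word →₀ ℕ) : Word →₀ ℕ :=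
  x.sum fun w m => y.sum fun w' m' => (m * m') • fus w w'

lemma wconj_append (a b : Word) : wconj (a ++ b) = wconj b ++ wconj a := by
  simp [wconj]

lemma wconj_length (w : Word) : (wconj w).length = w.length := by simp [wconj]

lemma fmul_zero_left (y : Word →₀ ℕ) : fmul 0 y = 0 := by
  simp [fmul]

lemma fmul_zero_right (x : Word →₀ ℕ) : fmul x 0 = 0 := by
  simp [fmul]

lemma fmul_add_left (x x' y : Word →₀ ℕ) : fmul (x + x') y = fmul x y + fmul x' y := by
  refine Finsupp.sum_add_index' (fun a => ?_) (fun a b1 b2 => ?_)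
  · simp
  · rw [← Finsupp.sum_add]
    congr 1; funext w' m'
    rw [add_mul, add_smul]

lemma fmul_add_right (x y y' : Word →₀ ℕ) : fmul x (y + y') = fmul x y + fmul x y' := by
  unfold fmul
  rw [← Finsupp.sum_add]
  congr 1; funext w m
  refine Finsupp.sum_add_index' (fun a => ?_) (fun a b1 b2 => ?_)
  · simp
  · rw [mul_add, add_smul]

lemma fmul_single_single (w w' : Word) (m m' : ℕ) :
    fmul (Finsupp.single w m) (Finsupp.single w' m') = (m * m') • fus w w' := by
  unfold fmul
  rw [Finsupp.sum_single_index, Finsupp.sum_single_index]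
  · simp
  · rw [Finsupp.sum_single_index] <;> simp

lemma fmul_smul_left (m : ℕ) (x y : Word →₀ ℕ) : fmul (m • x) y = m • fmul x y := by
  induction m with
  | zero => simp [fmul_zero_left]
  | succ k ih => rw [succ_nsmul, succ_nsmul, fmul_add_left, ih]

lemma fmul_smul_right (m : ℕ) (x y : Word →₀ ℕ) : fmul x (m • y) = m • fmul x y := by
  induction m with
  | zero => simp [fmul_zero_right]
  | succ k ih => rw [succ_nsmul, succ_nsmul, fmul_add_right, ih]

noncomputable def fmulL (z : Word →₀ ℕ) : (Word →₀ ℕ) →+ (Word →₀ ℕ) :=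
  ⟨⟨fun x => fmul x z, fmul_zero_left z⟩, fun a b => fmul_add_left a b z⟩

noncomputable def fmulR (z : Word →₀ ℕ) : (Word →₀ ℕ) →+ (Word →₀ ℕ) :=
  ⟨⟨fun x => fmul z x, fmul_zero_right z⟩, fun a b => fmul_add_right z a b⟩

def cnd (w w' : Word) (t : ℕ) : Prop :=
  t ≤ w.length ∧ t ≤ w'.length ∧ w.drop (w.length - t) = wconj (w'.take t)

instance : ∀ w w' t, Decidable (cnd w w' t) := fun w w' t => by unfold cnd; infer_instance

lemma list_sum_filter {M : Type*} [AddCommMonoid M] (p : ℕ → Prop) [DecidablePred p]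
    (f : ℕ → M) (k : ℕ) :
    (((List.range k).filter (fun t => decide (p t))).map f).sum
      = ∑ t ∈ Finset.range k, if p t then f t else 0 := by
  induction k with
  | zero => simp
  | succ n ih =>
      rw [List.range_succ, List.filter_append, List.map_append, List.sum_append, ih,
        Finset.sum_range_succ]
      by_cases h : p n <;> simp [h]

lemma fus_eq (w w' : Word) (n : ℕ) (hn : min w.length w'.length < n) :
    fus w w' = ∑ t ∈ Finset.range n,
      if cnd w w' t then Finsupp.single (w.take (w.length - t) ++ w'.drop t) (1 : ℕ) else 0 := by
  unfold fus
  rw [list_sum_filter (fun t => w.drop (w.length - t) = wconj (w'.take t))]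
  rw [← Finset.sum_subset (Finset.range_subset_range.2 hn)
    (f := fun t => if cnd w w' t then Finsupp.single (w.take (w.length - t) ++ w'.drop t) (1:ℕ) else 0)]
  · refine Finset.sum_congr rfl fun t ht => ?_
    rw [Finset.mem_range] at ht
    have h1 : t ≤ w.length := by omega
    have h2 : t ≤ w'.length := by omega
    simp only [cnd, h1, h2, true_and]
  · intro t _ ht
    rw [Finset.mem_range, not_lt] at ht
    have : ¬ cnd w w' t := fun ⟨h1, h2, _⟩ => by omega
    simp [this]

-- Forward transfer, case A: s + t ≤ |w2|
lemma fwdA (w1 w2 w3 : Word) (t s : ℕ)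
    (h1 : cnd w1 w2 t)
    (h2 : cnd (w1.take (w1.length - t) ++ w2.drop t) w3 s)
    (hc : s + t ≤ w2.length) :
    cnd w2 w3 s ∧ cnd w1 (w2.take (w2.length - s) ++ w3.drop s) t ∧
    (w1.take (w1.length - t) ++ w2.drop t).take
        ((w1.take (w1.length - t) ++ w2.drop t).length - s) ++ w3.drop s
      = w1.take (w1.length - t) ++ (w2.take (w2.length - s) ++ w3.drop s).drop t := by
  obtain ⟨ht1, ht2, e1⟩ := h1
  obtain ⟨hs12, hs3, e2⟩ := h2
  set l1 := w1.length with hl1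
  set l2 := w2.length with hl2
  set l3 := w3.length with hl3
  have hA : (w1.take (l1 - t)).length = l1 - t := by rw [List.length_take]; omega
  have hB : (w2.drop t).length = l2 - t := by rw [List.length_drop]
  have hAB : (w1.take (l1 - t) ++ w2.drop t).length = (l1 - t) + (l2 - t) := by
    rw [List.length_append, hA, hB]
  rw [hAB] at hs12 e2 ⊢
  -- rewrite the drop in e2
  have hidx : (l1 - t) + (l2 - t) - s = (w1.take (l1 - t)).length + ((l2 - t) - s) := by
    rw [hA]; omega
  rw [hidx, List.drop_length_add_append, List.drop_drop] at e2
  have hidx2 : t + ((l2 - t) - s) = l2 - s := by omega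
  rw [hidx2] at e2
  have hC : (w2.take (l2 - s)).length = l2 - s := by rw [List.length_take]; omega
  refine ⟨⟨by omega, hs3, e2⟩, ⟨ht1, ?_, ?_⟩, ?_⟩
  · rw [List.length_append, hC, List.length_drop]; omega
  · rw [List.take_append_of_le_length (by rw [hC]; omega), List.take_take,
      Nat.min_eq_left (by omega)]
    exact e1
  · have hidx3 : (l1 - t) + (l2 - t) - s = (w1.take (l1 - t)).length + ((l2 - t) - s) := hidx
    rw [hidx3, List.take_length_add_append, List.drop_append_of_le_length (by rw [hC]; omega),
      List.drop_take, List.append_assoc]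
    congr 3
    omega

-- Forward transfer, case B: s + t > |w2|
lemma fwdB (w1 w2 w3 : Word) (t s : ℕ)
    (h1 : cnd w1 w2 t)
    (h2 : cnd (w1.take (w1.length - t) ++ w2.drop t) w3 s)
    (hc : w2.length < s + t) :
    cnd w2 w3 (w2.length - t) ∧
    cnd w1 (w2.take (w2.length - (w2.length - t)) ++ w3.drop (w2.length - t))
      (s + 2 * t - w2.length) ∧
    (w1.take (w1.length - t) ++ w2.drop t).take
        ((w1.take (w1.length - t) ++ w2.drop t).length - s) ++ w3.drop s
      = w1.take (w1.length - (s + 2 * t - w2.length)) ++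
        (w2.take (w2.length - (w2.length - t)) ++ w3.drop (w2.length - t)).drop
          (s + 2 * t - w2.length) := by
  obtain ⟨ht1, ht2, e1⟩ := h1
  obtain ⟨hs12, hs3, e2⟩ := h2
  set l1 := w1.length with hl1
  set l2 := w2.length with hl2
  set l3 := w3.length with hl3
  have hA : (w1.take (l1 - t)).length = l1 - t := by rw [List.length_take]; omega
  have hB : (w2.drop t).length = l2 - t := by rw [List.length_drop]
  have hAB : (w1.take (l1 - t) ++ w2.drop t).length = (l1 - t) + (l2 - t) := by
    rw [List.length_append, hA, hB]
  rw [hAB] at hs12 e2 ⊢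
  set u := l2 - t with hu
  set m := s - u with hm
  have hul2 : l2 - (l2 - t) = t := by omega
  have hr : s + 2 * t - l2 = m + t := by omega
  have hml1 : m ≤ l1 - t := by omega
  have hul3 : u ≤ l3 := by omega
  have hml3 : m ≤ l3 - u := by omega
  -- decompose e2
  have hidx : (l1 - t) + (l2 - t) - s = (l1 - t) - m := by omega
  rw [hidx] at e2
  rw [List.drop_append_of_le_length (by rw [hA]; omega), List.drop_take] at e2
  have hidxm : (l1 - t) - ((l1 - t) - m) = m := by omega
  rw [hidxm] at e2
  have hsplit : w3.take s = w3.take u ++ (w3.drop u).take m := by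
    rw [← List.take_add]; congr 1; omega
  rw [hsplit, wconj_append] at e2
  have e2' := List.append_inj' e2 (by
    rw [hB, wconj_length, List.length_take]; omega)
  obtain ⟨E1, E2⟩ := e2'
  have hCl : (w2.take (l2 - u)).length = l2 - u := by rw [List.length_take]; omega
  refine ⟨⟨by omega, hul3, by rw [hul2] at *; exact E2⟩, ⟨by omega, ?_, ?_⟩, ?_⟩
  · rw [List.length_append, hCl, List.length_drop]; omega
  · -- equation: w1.drop (l1 - (m+t)) = wconj (take (m+t) (C ++ E))
    rw [hr, hul2]
    have htl : (w2.take t).length = t := by rw [List.length_take]; omega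
    have hsplit2 : (w2.take t ++ w3.drop u).take (m + t)
        = w2.take t ++ (w3.drop u).take m := by
      rw [show m + t = (w2.take t).length + m from by rw [htl]; omega, List.take_length_add_append]
    rw [hsplit2, wconj_append, ← E1, ← e1,
      show l1 - (m + t) = (l1 - t) - m from by omega]
    conv_lhs => rw [← List.take_append_drop m (w1.drop ((l1 - t) - m))]
    rw [List.drop_drop, show (l1 - t) - m + m = l1 - t from by omega]
  · -- word equality
    rw [hidx, List.take_append_of_le_length (by rw [hA]; omega), List.take_take,
      Nat.min_eq_left (by omega), hr, hul2]
    have htl : (w2.take t).length = t := by rw [List.length_take]; omega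
    have hdrop : (w2.take t ++ w3.drop u).drop (m + t) = w3.drop s := by
      rw [show m + t = (w2.take t).length + m from by rw [htl]; omega,
        List.drop_length_add_append, List.drop_drop, show u + m = s from by omega]
    rw [hdrop, show l1 - (m + t) = (l1 - t) - m from by omega]

-- Backward transfer, case A: r + u ≤ |w2|
lemma bwdA (w1 w2 w3 : Word) (u r : ℕ)
    (h1 : cnd w2 w3 u)
    (h2 : cnd w1 (w2.take (w2.length - u) ++ w3.drop u) r)
    (hc : r + u ≤ w2.length) :
    cnd w1 w2 r ∧ cnd (w1.take (w1.length - r) ++ w2.drop r) w3 u := by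
  obtain ⟨hu2, hu3, e1⟩ := h1
  obtain ⟨hr1, hr2, e2⟩ := h2
  set l1 := w1.length with hl1
  set l2 := w2.length with hl2
  set l3 := w3.length with hl3
  have hC : (w2.take (l2 - u)).length = l2 - u := by rw [List.length_take]; omega
  rw [List.length_append, hC, List.length_drop] at hr2
  rw [List.take_append_of_le_length (by rw [hC]; omega), List.take_take,
    Nat.min_eq_left (by omega)] at e2
  have hA : (w1.take (l1 - r)).length = l1 - r := by rw [List.length_take]; omega
  refine ⟨⟨hr1, by omega, e2⟩, ⟨?_, hu3, ?_⟩⟩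
  · rw [List.length_append, hA, List.length_drop]; omega
  · rw [show (w1.take (l1 - r) ++ w2.drop r).length - u
        = (w1.take (l1 - r)).length + ((l2 - r) - u) from by
      rw [List.length_append, hA, List.length_drop]; omega]
    rw [List.drop_length_add_append, List.drop_drop, show r + ((l2 - r) - u) = l2 - u from by omega]
    exact e1

-- Backward transfer, case B: r + u > |w2|
lemma bwdB (w1 w2 w3 : Word) (u r : ℕ)
    (h1 : cnd w2 w3 u)
    (h2 : cnd w1 (w2.take (w2.length - u) ++ w3.drop u) r)
    (hc : w2.length < r + u) :
    cnd w1 w2 (w2.length - u) ∧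
    cnd (w1.take (w1.length - (w2.length - u)) ++ w2.drop (w2.length - u)) w3
      (r + 2 * u - w2.length) := by
  obtain ⟨hu2, hu3, e1⟩ := h1
  obtain ⟨hr1, hr2, e2⟩ := h2
  set l1 := w1.length with hl1
  set l2 := w2.length with hl2
  set l3 := w3.length with hl3
  set t := l2 - u with ht
  set m := r - t with hm
  have hC : (w2.take t).length = t := by rw [List.length_take]; omega
  rw [List.length_append, hC, List.length_drop] at hr2
  have hmr : r = t + m := by omega
  have hml : m ≤ l3 - u := by omega
  have hs : r + 2 * u - l2 = m + u := by omega
  -- decompose e2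
  rw [show r = (w2.take t).length + m from by rw [hC]; omega, List.take_length_add_append,
    wconj_append] at e2
  have hLs : w1.drop (l1 - ((w2.take t).length + m))
      = (w1.drop (l1 - r)).take m ++ w1.drop (l1 - t) := by
    rw [hC, show l1 - (t + m) = l1 - r from by omega]
    conv_lhs => rw [← List.take_append_drop m (w1.drop (l1 - r))]
    rw [List.drop_drop, show l1 - r + m = l1 - t from by omega]
  rw [hLs] at e2
  have e2' := List.append_inj' e2 (by rw [List.length_drop, wconj_length, hC]; omega)
  obtain ⟨F1, F2⟩ := e2'
  have hA : (w1.take (l1 - t)).length = l1 - t := by rw [List.length_take]; omega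
  refine ⟨⟨by omega, by omega, F2⟩, ⟨?_, by omega, ?_⟩⟩
  · rw [List.length_append, hA, List.length_drop]; omega
  · rw [show (w1.take (l1 - t) ++ w2.drop t).length - (r + 2 * u - l2)
        = (l1 - t) - m from by rw [List.length_append, hA, List.length_drop]; omega]
    rw [List.drop_append_of_le_length (by rw [hA]; omega), List.drop_take,
      show (l1 - t) - ((l1 - t) - m) = m from by omega,
      show (l1 - t) - m = l1 - r from by omega]
    rw [hs, show m + u = u + m from by omega, List.take_add, wconj_append, ← F1, ← e1]

lemma fmul_sum_left {ι : Type*} (s : Finset ι) (f : ι → (Word →₀ ℕ)) (z : Word →₀ ℕ) :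
    fmul (∑ i ∈ s, f i) z = ∑ i ∈ s, fmul (f i) z :=
  map_sum (fmulL z) f s

lemma fmul_sum_right {ι : Type*} (s : Finset ι) (f : ι → (Word →₀ ℕ)) (z : Word →₀ ℕ) :
    fmul z (∑ i ∈ s, f i) = ∑ i ∈ s, fmul z (f i) :=
  map_sum (fmulR z) f s

def phi (l2 : ℕ) (p : ℕ × ℕ) : ℕ × ℕ :=
  if p.2 + p.1 ≤ l2 then (p.2, p.1) else (l2 - p.1, p.2 + 2 * p.1 - l2)

lemma phi_phi (l2 t s : ℕ) (h : t ≤ l2) : phi l2 (phi l2 (t, s)) = (t, s) := by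
  unfold phi
  split_ifs <;> simp_all [Prod.ext_iff] <;> omega

lemma core (w1 w2 w3 : Word) :
    fmul (fus w1 w2) (Finsupp.single w3 1) = fmul (Finsupp.single w1 1) (fus w2 w3) := by
  set n := w1.length + w2.length + w3.length + 1 with hn
  have hL : fmul (fus w1 w2) (Finsupp.single w3 1)
      = ∑ p ∈ (Finset.range n ×ˢ Finset.range n).filter
          (fun p => cnd w1 w2 p.1 ∧ cnd (w1.take (w1.length - p.1) ++ w2.drop p.1) w3 p.2),
        Finsupp.single ((w1.take (w1.length - p.1) ++ w2.drop p.1).take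
            ((w1.take (w1.length - p.1) ++ w2.drop p.1).length - p.2) ++ w3.drop p.2) (1 : ℕ) := by
    rw [fus_eq w1 w2 n (by omega), fmul_sum_left, Finset.sum_filter, Finset.sum_product]
    refine Finset.sum_congr rfl fun t _ => ?_
    by_cases h : cnd w1 w2 t
    · rw [if_pos h, fmul_single_single, one_mul, one_smul,
        fus_eq _ w3 n (lt_of_le_of_lt (min_le_right _ _) (by omega))]
      exact Finset.sum_congr rfl fun s _ => by simp [h]
    · rw [if_neg h, fmul_zero_left]
      exact (Finset.sum_eq_zero fun s _ => by simp [h]).symm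
  have hR : fmul (Finsupp.single w1 1) (fus w2 w3)
      = ∑ q ∈ (Finset.range n ×ˢ Finset.range n).filter
          (fun q => cnd w2 w3 q.1 ∧ cnd w1 (w2.take (w2.length - q.1) ++ w3.drop q.1) q.2),
        Finsupp.single (w1.take (w1.length - q.2) ++
            (w2.take (w2.length - q.1) ++ w3.drop q.1).drop q.2) (1 : ℕ) := by
    rw [fus_eq w2 w3 n (by omega), fmul_sum_right, Finset.sum_filter, Finset.sum_product]
    refine Finset.sum_congr rfl fun u _ => ?_
    by_cases h : cnd w2 w3 u
    · rw [if_pos h, fmul_single_single, one_mul, one_smul,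
        fus_eq w1 _ n (lt_of_le_of_lt (min_le_left _ _) (by omega))]
      exact Finset.sum_congr rfl fun r _ => by simp [h]
    · rw [if_neg h, fmul_zero_right]
      exact (Finset.sum_eq_zero fun r _ => by simp [h]).symm
  rw [hL, hR]
  refine Finset.sum_nbij' (phi w2.length) (phi w2.length) ?_ ?_ ?_ ?_ ?_
  · -- forward membership
    rintro ⟨t, s⟩ hp
    simp only [Finset.mem_filter, Finset.mem_product, Finset.mem_range] at hp ⊢
    obtain ⟨⟨htn, hsn⟩, h1, h2⟩ := hp
    have hsb : s ≤ (w1.length - t) + (w2.length - t) := by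
      have := h2.1
      simp only [List.length_append, List.length_take, List.length_drop] at this
      omega
    have ht2 : t ≤ w2.length := h1.2.1
    by_cases hc : s + t ≤ w2.length
    · rw [phi, if_pos hc]
      exact ⟨⟨by omega, by omega⟩, (fwdA w1 w2 w3 t s h1 h2 hc).1, (fwdA w1 w2 w3 t s h1 h2 hc).2.1⟩
    · rw [phi, if_neg hc]
      exact ⟨⟨by omega, by omega⟩, (fwdB w1 w2 w3 t s h1 h2 (by omega)).1,
        (fwdB w1 w2 w3 t s h1 h2 (by omega)).2.1⟩
  · -- backward membership
    rintro ⟨u, r⟩ hq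
    simp only [Finset.mem_filter, Finset.mem_product, Finset.mem_range] at hq ⊢
    obtain ⟨⟨hun, hrn⟩, h1, h2⟩ := hq
    have hrb : r ≤ (w2.length - u) + (w3.length - u) := by
      have := h2.2.1
      simp only [List.length_append, List.length_take, List.length_drop] at this
      omega
    have hu2 : u ≤ w2.length := h1.1
    by_cases hc : r + u ≤ w2.length
    · rw [phi, if_pos hc]
      exact ⟨⟨by omega, by omega⟩, (bwdA w1 w2 w3 u r h1 h2 hc).1, (bwdA w1 w2 w3 u r h1 h2 hc).2⟩
    · rw [phi, if_neg hc]
      exact ⟨⟨by omega, by omega⟩, (bwdB w1 w2 w3 u r h1 h2 (by omega)).1,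
        (bwdB w1 w2 w3 u r h1 h2 (by omega)).2⟩
  · rintro ⟨t, s⟩ hp
    simp only [Finset.mem_filter, Finset.mem_product, Finset.mem_range] at hp
    exact phi_phi w2.length t s hp.2.1.2.1
  · rintro ⟨u, r⟩ hq
    simp only [Finset.mem_filter, Finset.mem_product, Finset.mem_range] at hq
    exact phi_phi w2.length u r hq.2.1.1
  · -- word equality
    rintro ⟨t, s⟩ hp
    simp only [Finset.mem_filter, Finset.mem_product, Finset.mem_range] at hp
    obtain ⟨⟨htn, hsn⟩, h1, h2⟩ := hp
    by_cases hc : s + t ≤ w2.length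
    · rw [phi, if_pos hc]
      exact congrArg (fun v => Finsupp.single v 1) (fwdA w1 w2 w3 t s h1 h2 hc).2.2
    · rw [phi, if_neg hc]
      exact congrArg (fun v => Finsupp.single v 1) (fwdB w1 w2 w3 t s h1 h2 (by omega)).2.2

lemma fus_nil_left (w : Word) : fus [] w = Finsupp.single w 1 := by
  simp [fus, wconj, List.range_succ]

lemma fus_nil_right (w : Word) : fus w [] = Finsupp.single w 1 := by
  simp [fus, wconj, List.range_succ, List.drop_length, List.take_length]

lemma single_eq_smul (a : Word) (b : ℕ) :
    (Finsupp.single a b : Word →₀ ℕ) = b • Finsupp.single a 1 := by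
  rw [Finsupp.smul_single, smul_eq_mul, mul_one]

lemma unit_left (x : Word →₀ ℕ) : fmul (Finsupp.single ([] : Word) 1) x = x := by
  induction x using Finsupp.induction with
  | zero => exact fmul_zero_right _
  | single_add a b f _ _ ih =>
      rw [fmul_add_right, ih, fmul_single_single, one_mul, fus_nil_left, single_eq_smul a b]

lemma unit_right (x : Word →₀ ℕ) : fmul x (Finsupp.single ([] : Word) 1) = x := by
  induction x using Finsupp.induction with
  | zero => exact fmul_zero_left _
  | single_add a b f _ _ ih =>
      rw [fmul_add_left, ih, fmul_single_single, mul_one, fus_nil_right, single_eq_smul a b]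

lemma assoc_ss (a b : Word) (z : Word →₀ ℕ) :
    fmul (fmul (Finsupp.single a 1) (Finsupp.single b 1)) z
      = fmul (Finsupp.single a 1) (fmul (Finsupp.single b 1) z) := by
  induction z using Finsupp.induction with
  | zero => rw [fmul_zero_right, fmul_zero_right, fmul_zero_right]
  | single_add c d f _ _ ih =>
      rw [fmul_add_right, fmul_add_right, fmul_add_right, ih]
      congr 1
      rw [single_eq_smul c d, fmul_smul_right, fmul_smul_right, fmul_smul_right]
      congr 1
      rw [fmul_single_single, one_mul, one_smul, fmul_single_single, one_mul, one_smul]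
      exact core a b c

set_option maxHeartbeats 1000000 in
lemma assoc_s (a : Word) (y z : Word →₀ ℕ) :
    fmul (fmul (Finsupp.single a 1) y) z = fmul (Finsupp.single a 1) (fmul y z) := by
  induction y using Finsupp.induction with
  | zero => simp [fmul_zero_left, fmul_zero_right]
  | single_add b c f _ _ ih =>
      rw [fmul_add_right, fmul_add_left, fmul_add_left, fmul_add_right, ih]
      congr 1
      rw [single_eq_smul b c]
      rw [fmul_smul_right]
      rw [fmul_smul_left]
      rw [fmul_smul_left]
      rw [fmul_smul_right]
      congr 1
      exact assoc_ss a b z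

set_option maxHeartbeats 1000000 in
lemma fmul_assoc (x y z : Word →₀ ℕ) : fmul (fmul x y) z = fmul x (fmul y z) := by
  induction x using Finsupp.induction with
  | zero => simp [fmul_zero_left]
  | single_add a b f _ _ ih =>
      rw [fmul_add_left, fmul_add_left, fmul_add_left, ih]
      congr 1
      rw [single_eq_smul a b]
      rw [fmul_smul_left]
      rw [fmul_smul_left]
      rw [fmul_smul_left]
      congr 1
      exact assoc_s a y z


/-- the `U_N^+` fusion rule defines an associative multiplication
on the free abelian semigroup on words, with the empty word as unit. -/
theorem stmt11 :
    (∀ x y z : Word →₀ ℕ, fmul (fmul x y) z = fmul x (fmul y z)) ∧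
    (∀ x : Word →₀ ℕ,
      fmul (Finsupp.single ([] : Word) 1) x = x ∧
      fmul x (Finsupp.single ([] : Word) 1) = x) := by
  exact ⟨fmul_assoc, fun x => ⟨unit_left x, unit_right x⟩⟩
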